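/- The merit function ψ : ℝ² → ℝ defined by ψ(a,b) := (1/2)(√(a² + b²) − (a + b))² is continuously differentiable on all of ℝ² (even though the Fischer–Burmeister function φ_FB(a,b) := √(a² + b²) − (a + b) itself is not differentiable at the origin). -/

import Mathlib

open Real Asymptotics

noncomputable def rr (p : ℝ × ℝ) : ℝ := Real.sqrt (p.1 ^ 2 + p.2 ^ 2)

noncomputable def FF (p : ℝ × ℝ) : (ℝ × ℝ) →L[ℝ] ℝ :=
  rr p • (ContinuousLinearMap.fst ℝ ℝ ℝ + ContinuousLinearMap.snd ℝ ℝ ℝ)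
  + ((p.1 + p.2) * p.1 / rr p) • ContinuousLinearMap.fst ℝ ℝ ℝ
  + ((p.1 + p.2) * p.2 / rr p) • ContinuousLinearMap.snd ℝ ℝ ℝ

lemma rr_cont : Continuous rr := by unfold rr; fun_prop

lemma abs_fst_le_rr (p : ℝ × ℝ) : |p.1| ≤ rr p := by
  rw [← Real.sqrt_sq_eq_abs]
  exact Real.sqrt_le_sqrt (by nlinarith [sq_nonneg p.2])

lemma abs_snd_le_rr (p : ℝ × ℝ) : |p.2| ≤ rr p := by
  rw [← Real.sqrt_sq_eq_abs]
  exact Real.sqrt_le_sqrt (by nlinarith [sq_nonneg p.1])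

lemma rr_pos {p : ℝ × ℝ} (hp : p ≠ 0) : 0 < rr p := by
  apply Real.sqrt_pos.2
  by_contra h'
  push_neg at h'
  have h1 : p.1 = 0 := by nlinarith [sq_nonneg p.1, sq_nonneg p.2]
  have h2 : p.2 = 0 := by nlinarith [sq_nonneg p.1, sq_nonneg p.2]
  exact hp (Prod.ext h1 h2)

lemma rr_le (p : ℝ × ℝ) : rr p ≤ 2 * ‖p‖ := by
  have h1 : |p.1| ≤ ‖p‖ := norm_fst_le p
  have h2 : |p.2| ≤ ‖p‖ := norm_snd_le p
  have : rr p ≤ Real.sqrt (2 * ‖p‖ ^ 2) := by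
    apply Real.sqrt_le_sqrt
    nlinarith [abs_nonneg p.1, abs_nonneg p.2, sq_abs p.1, sq_abs p.2]
  calc rr p ≤ Real.sqrt (2 * ‖p‖ ^ 2) := this
    _ ≤ Real.sqrt ((2 * ‖p‖) ^ 2) := Real.sqrt_le_sqrt (by nlinarith [norm_nonneg p])
    _ = |2 * ‖p‖| := Real.sqrt_sq_eq_abs _
    _ = 2 * ‖p‖ := abs_of_nonneg (by positivity)

lemma hasFDerivAt_g (p : ℝ × ℝ) :
    HasFDerivAt (fun q : ℝ × ℝ => (q.1 + q.2) * rr q) (FF p) p := by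
  by_cases hp : p = 0
  · subst hp
    have hF0 : FF 0 = 0 := by
      simp [FF, rr]
    rw [hF0]
    rw [hasFDerivAt_iff_isLittleO_nhds_zero]
    simp only [zero_add, ContinuousLinearMap.zero_apply, sub_zero]
    rw [isLittleO_iff]
    intro c hc
    have : ∀ᶠ q : ℝ × ℝ in nhds 0, ‖q‖ < c / 4 := by
      have : Metric.ball (0 : ℝ × ℝ) (c / 4) ∈ nhds (0 : ℝ × ℝ) :=
        Metric.ball_mem_nhds _ (by positivity)
      filter_upwards [this] with q hq
      simpa using hq
    filter_upwards [this] with q hq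
    have h0 : rr 0 = 0 := by simp [rr]
    rw [h0, mul_zero, sub_zero]
    have hb : ‖(q.1 + q.2) * rr q‖ ≤ 2 * ‖q‖ * (2 * ‖q‖) := by
      rw [norm_mul]
      apply mul_le_mul _ _ (norm_nonneg _) (by positivity)
      · calc ‖q.1 + q.2‖ ≤ ‖q.1‖ + ‖q.2‖ := norm_add_le _ _
          _ ≤ ‖q‖ + ‖q‖ := add_le_add (norm_fst_le q) (norm_snd_le q)
          _ = 2 * ‖q‖ := by ring
      · have hnn : (0:ℝ) ≤ rr q := Real.sqrt_nonneg _
        rw [Real.norm_eq_abs, abs_of_nonneg hnn]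
        exact rr_le q
    calc ‖(q.1 + q.2) * rr q‖ ≤ 2 * ‖q‖ * (2 * ‖q‖) := hb
      _ = 4 * ‖q‖ * ‖q‖ := by ring
      _ ≤ c * ‖q‖ := by nlinarith [norm_nonneg q]
  · have hr : rr p ≠ 0 := ne_of_gt (rr_pos hp)
    have hq : p.1 ^ 2 + p.2 ^ 2 ≠ 0 := by
      intro h; apply hr; simp [rr, h]
    have hm : HasFDerivAt (fun q : ℝ × ℝ => q.1 ^ 2 + q.2 ^ 2)
        ((2 * p.1) • ContinuousLinearMap.fst ℝ ℝ ℝ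
          + (2 * p.2) • ContinuousLinearMap.snd ℝ ℝ ℝ) p := by
      have h1 : HasFDerivAt (fun q : ℝ × ℝ => q.1 ^ 2)
          ((2 * p.1) • ContinuousLinearMap.fst ℝ ℝ ℝ) p := by
        have := (hasDerivAt_pow 2 p.1).comp_hasFDerivAt p
          (hasFDerivAt_fst (𝕜 := ℝ) (p := p) (F := ℝ))
        refine this.congr_fderiv ?_
        congr 1
        push_cast
        ring
      have h2 : HasFDerivAt (fun q : ℝ × ℝ => q.2 ^ 2)
          ((2 * p.2) • ContinuousLinearMap.snd ℝ ℝ ℝ) p := by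
        have := (hasDerivAt_pow 2 p.2).comp_hasFDerivAt p
          (hasFDerivAt_snd (𝕜 := ℝ) (p := p) (F := ℝ))
        refine this.congr_fderiv ?_
        congr 1
        push_cast
        ring
      exact h1.add h2
    have hsq : HasFDerivAt rr
        ((1 / (2 * rr p)) • ((2 * p.1) • ContinuousLinearMap.fst ℝ ℝ ℝ
          + (2 * p.2) • ContinuousLinearMap.snd ℝ ℝ ℝ)) p :=
      (Real.hasDerivAt_sqrt hq).comp_hasFDerivAt p hm
    have hs : HasFDerivAt (fun q : ℝ × ℝ => q.1 + q.2)
        (ContinuousLinearMap.fst ℝ ℝ ℝ + ContinuousLinearMap.snd ℝ ℝ ℝ) p :=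
      hasFDerivAt_fst.add hasFDerivAt_snd
    have := hs.mul hsq
    refine this.congr_fderiv ?_
    refine ContinuousLinearMap.ext fun v => ?_
    simp only [FF, ContinuousLinearMap.add_apply, ContinuousLinearMap.smul_apply,
      ContinuousLinearMap.coe_fst', ContinuousLinearMap.coe_snd', smul_eq_mul]
    field_simp
    ring

lemma cont_coef (sel : ℝ × ℝ → ℝ) (hsel : Continuous sel)
    (hle : ∀ p, |sel p| ≤ rr p) :
    Continuous (fun p : ℝ × ℝ => (p.1 + p.2) * sel p / rr p) := by
  rw [continuous_iff_continuousAt]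
  intro p
  by_cases hp : p = 0
  · subst hp
    have h0 : ((0:ℝ×ℝ).1 + (0:ℝ×ℝ).2) * sel 0 / rr 0 = 0 := by simp [rr]
    rw [ContinuousAt, h0]
    apply squeeze_zero_norm (a := fun p : ℝ × ℝ => |p.1 + p.2|)
    · intro q
      rw [Real.norm_eq_abs, abs_div, abs_mul]
      by_cases hq : rr q = 0
      · have : |sel q| = 0 := le_antisymm (hq ▸ hle q) (abs_nonneg _)
        simp [this, hq]
      · have hrq : (0:ℝ) < rr q := lt_of_le_of_ne (Real.sqrt_nonneg _) (Ne.symm hq)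
        rw [abs_of_pos hrq, div_le_iff₀ hrq]
        exact mul_le_mul_of_nonneg_left (hle q) (abs_nonneg _)
    · have : Continuous (fun p : ℝ × ℝ => |p.1 + p.2|) := by fun_prop
      have h := this.tendsto (0 : ℝ × ℝ)
      simpa using h
  · exact ((continuous_fst.add continuous_snd).mul hsel).continuousAt.div
      rr_cont.continuousAt (ne_of_gt (rr_pos hp))

lemma cont_FF : Continuous FF := by
  unfold FF
  apply Continuous.add
  apply Continuous.add
  · exact (rr_cont.smul continuous_const)
  · have := cont_coef (fun p => p.1) continuous_fst abs_fst_le_rr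
    simp only [mul_div_assoc] at this ⊢
    exact this.smul continuous_const
  · have := cont_coef (fun p => p.2) continuous_snd abs_snd_le_rr
    simp only [mul_div_assoc] at this ⊢
    exact this.smul continuous_const

lemma contDiff_g : ContDiff ℝ 1 (fun q : ℝ × ℝ => (q.1 + q.2) * rr q) := by
  rw [contDiff_one_iff_fderiv]
  refine ⟨fun p => (hasFDerivAt_g p).differentiableAt, ?_⟩
  have : (fderiv ℝ fun q : ℝ × ℝ => (q.1 + q.2) * rr q) = FF :=
    funext fun p => (hasFDerivAt_g p).fderiv
  rw [this]
  exact cont_FF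

/-- The Fischer–Burmeister merit function ψ(a,b) = (1/2)(√(a²+b²) − (a+b))² is
continuously differentiable on ℝ², even though the Fischer–Burmeister function
itself is not differentiable at the origin. -/
theorem stmt_16 :
    ContDiff ℝ 1 (fun p : ℝ × ℝ =>
      (1 / 2) * (Real.sqrt (p.1 ^ 2 + p.2 ^ 2) - (p.1 + p.2)) ^ 2) ∧
    ¬ DifferentiableAt ℝ (fun p : ℝ × ℝ =>
      Real.sqrt (p.1 ^ 2 + p.2 ^ 2) - (p.1 + p.2)) (0, 0) := by
  constructor
  · have heq : (fun p : ℝ × ℝ =>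
        (1 / 2) * (Real.sqrt (p.1 ^ 2 + p.2 ^ 2) - (p.1 + p.2)) ^ 2)
        = fun p : ℝ × ℝ => ((1/2) * (p.1 ^ 2 + p.2 ^ 2) + (1/2) * (p.1 + p.2) ^ 2)
            - (p.1 + p.2) * Real.sqrt (p.1 ^ 2 + p.2 ^ 2) := by
      funext p
      have hr : Real.sqrt (p.1 ^ 2 + p.2 ^ 2) ^ 2 = p.1 ^ 2 + p.2 ^ 2 :=
        Real.sq_sqrt (by positivity)
      ring_nf
      linear_combination ((1:ℝ)/2) * hr
    rw [heq]
    have hg := contDiff_g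
    unfold rr at hg
    exact ContDiff.sub (by fun_prop) hg
  · intro h
    have h2 : DifferentiableAt ℝ (fun t : ℝ => ((t : ℝ), (0:ℝ))) 0 := by fun_prop
    have h3 : DifferentiableAt ℝ ((fun p : ℝ × ℝ =>
        Real.sqrt (p.1 ^ 2 + p.2 ^ 2) - (p.1 + p.2)) ∘ fun t : ℝ => ((t:ℝ), (0:ℝ))) 0 :=
      DifferentiableAt.comp (0 : ℝ) h h2
    have h4 := h3.fun_add (differentiableAt_fun_id)
    have habs : (fun t : ℝ => ((fun p : ℝ × ℝ =>
        Real.sqrt (p.1 ^ 2 + p.2 ^ 2) - (p.1 + p.2)) ∘ fun t : ℝ => ((t:ℝ), (0:ℝ))) t + t)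
        = fun t : ℝ => |t| := by
      funext t
      simp [Function.comp, Real.sqrt_sq_eq_abs]
    rw [habs] at h4
    exact not_differentiableAt_abs_zero h4
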